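/- For all complex α, γ, x with γ ∉ ℤ and α, α−γ avoiding values making the Gamma factors singular, the following Wronskian-type identity holds: ₁F₁(α; γ; x)·₁F₁(α−γ; 1−γ; x) − ((γ−α)x/(γ(γ−1)))·₁F₁(α; γ+1; x)·₁F₁(α−γ+1; 2−γ; x) = e^x. -/

import Mathlib

open Classical

/-- Pochhammer symbol (a)_k. -/
noncomputable def poch (a : ℂ) (k : ℕ) : ℂ := ∏ j ∈ Finset.range k, (a + j)

/-- Kummer confluent hypergeometric function ₁F₁(a;b;x). -/
noncomputable def oneF1 (a b x : ℂ) : ℂ :=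
  ∑' k : ℕ, poch a k / poch b k * x ^ k / (Nat.factorial k)
set_option maxHeartbeats 1000000

lemma poch_zero (a : ℂ) : poch a 0 = 1 := by simp [poch]
lemma poch_succ (a : ℂ) (k : ℕ) : poch a (k+1) = poch a k * (a + k) :=
  Finset.prod_range_succ _ _
lemma poch_one (a : ℂ) : poch a 1 = a := by simp [poch]
lemma poch_ne_zero {a : ℂ} (h : ∀ j : ℕ, a + (j:ℂ) ≠ 0) (k : ℕ) : poch a k ≠ 0 :=
  Finset.prod_ne_zero_iff.2 fun j _ => h j

lemma summable_norm_oneF1 (a b x : ℂ) (hb : ∀ j : ℕ, b + (j:ℂ) ≠ 0) :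
    Summable fun k : ℕ => ‖poch a k / poch b k * x ^ k / (Nat.factorial k : ℂ)‖ := by
  set f : ℕ → ℂ := fun k => poch a k / poch b k * x ^ k / (Nat.factorial k : ℂ) with hf
  have hrec : ∀ k : ℕ, f (k+1) = f k * ((a + k) * x / ((b + k) * (k+1))) := by
    intro k
    have h1 : poch b k ≠ 0 := poch_ne_zero hb k
    have h2 : b + (k:ℂ) ≠ 0 := hb k
    have h3 : ((Nat.factorial k : ℂ)) ≠ 0 := by
      exact_mod_cast Nat.cast_ne_zero.2 (Nat.factorial_ne_zero k)
    have h4 : ((k:ℂ) + 1) ≠ 0 := by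
      exact_mod_cast (Nat.cast_ne_zero (R:=ℂ)).2 (Nat.succ_ne_zero k)
    simp only [hf, poch_succ, Nat.factorial_succ, Nat.cast_mul, pow_succ,
      Nat.cast_add, Nat.cast_one]
    field_simp
  apply summable_of_ratio_norm_eventually_le (r := 1/2) (by norm_num)
  obtain ⟨N1, hN1⟩ := exists_nat_ge ‖a‖
  obtain ⟨N2, hN2⟩ := exists_nat_ge (2 * ‖b‖)
  obtain ⟨N3, hN3⟩ := exists_nat_ge (8 * ‖x‖)
  rw [Filter.eventually_atTop]
  refine ⟨N1 + N2 + N3 + 1, fun k hk => ?_⟩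
  rw [norm_norm, norm_norm, show poch a (k + 1) / poch b (k + 1) * x ^ (k + 1) / ((k + 1).factorial : ℂ) = f (k+1) from rfl, show poch a k / poch b k * x ^ k / (k.factorial : ℂ) = f k from rfl, hrec k, norm_mul, mul_comm ((1:ℝ)/2)]
  apply mul_le_mul_of_nonneg_left _ (norm_nonneg _)
  have hk1 : (N1 : ℝ) ≤ k := by exact_mod_cast Nat.le_of_lt (by omega)
  have hk2 : (N2 : ℝ) ≤ k := by exact_mod_cast Nat.le_of_lt (by omega)
  have hk3 : (N3 : ℝ) ≤ k := by exact_mod_cast Nat.le_of_lt (by omega)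
  have hka : ‖a‖ ≤ (k:ℝ) := le_trans hN1 hk1
  have hkb : 2 * ‖b‖ ≤ (k:ℝ) := le_trans hN2 hk2
  have hkx : 8 * ‖x‖ ≤ (k:ℝ) := le_trans hN3 hk3
  have hknn : (1:ℝ) ≤ (k:ℝ) := by exact_mod_cast Nat.one_le_cast.2 (by omega)
  have hak : ‖a + k‖ ≤ ‖a‖ + k := by
    calc ‖a + (k:ℂ)‖ ≤ ‖a‖ + ‖(k:ℂ)‖ := norm_add_le _ _
    _ = ‖a‖ + k := by rw [Complex.norm_natCast]
  have hbk : (k:ℝ) - ‖b‖ ≤ ‖b + k‖ := by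
    have : ‖(k:ℂ)‖ ≤ ‖b + k‖ + ‖b‖ := by
      calc ‖(k:ℂ)‖ = ‖(b + k) + (-b)‖ := by ring_nf
      _ ≤ ‖b + (k:ℂ)‖ + ‖-b‖ := norm_add_le _ _
      _ = ‖b + (k:ℂ)‖ + ‖b‖ := by rw [norm_neg]
    rw [Complex.norm_natCast] at this
    linarith
  rw [norm_div, norm_mul, norm_mul]
  have hnk1 : ‖(k:ℂ) + 1‖ = (k:ℝ) + 1 := by
    rw [show ((k:ℂ) + 1) = ((k+1 : ℕ) : ℂ) by push_cast; ring, Complex.norm_natCast]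
    push_cast; ring
  rw [hnk1]
  have hbpos : (0:ℝ) < ‖b + (k:ℂ)‖ * ((k:ℝ)+1) := by nlinarith [norm_nonneg b]
  rw [div_le_iff₀ hbpos]
  have hxnn : (0:ℝ) ≤ ‖x‖ := norm_nonneg _
  calc ‖a + (k:ℂ)‖ * ‖x‖ ≤ (‖a‖ + k) * ‖x‖ := by
        apply mul_le_mul_of_nonneg_right hak hxnn
  _ ≤ 1/2 * (((k:ℝ) - ‖b‖) * ((k:ℝ)+1)) := by nlinarith [norm_nonneg a, norm_nonneg b]
  _ ≤ 1/2 * (‖b + (k:ℂ)‖ * ((k:ℝ)+1)) := by nlinarith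

lemma poch_succ' (a : ℂ) (k : ℕ) : poch a (k+1) = a * poch (a+1) k := by
  rw [poch, Finset.prod_range_succ']
  simp only [Nat.cast_zero, add_zero]
  rw [mul_comm, poch]
  congr 1
  apply Finset.prod_congr rfl
  intro i _
  push_cast
  ring

lemma poch_shift (a : ℂ) (k : ℕ) : a * poch (a+1) k = poch a k * (a + k) := by
  induction k with
  | zero => simp [poch_zero]
  | succ k ih =>
    rw [poch_succ, poch_succ, ← mul_assoc, ih]
    push_cast
    ring


noncomputable def Tc (α γ : ℂ) (n k : ℕ) : ℂ :=
  (n.choose k : ℂ) * poch α k * poch (α-γ) (n-k) * (γ + 2*k - n) /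
    (poch γ (k+1) * poch (1-γ) (n-k))

noncomputable def Gc (α γ : ℂ) (n : ℕ) : ℕ → ℂ
  | 0 => 0
  | (k+1) => -(n.choose k : ℂ) * poch α (k+1) * poch (α-γ) (n-k) /
      (poch γ (k+1) * poch (1-γ) (n-k))

lemma tele_key (α γ A B P Q c0 c1 K J : ℂ) (hA : γ + (K+1) ≠ 0) (hB : 1 - γ + J ≠ 0)
    (hP : P ≠ 0) (hQ : Q ≠ 0)
    (hrel : c1 * (K + 1) = c0 * (J + 1)) :
    (c0 + c1) * A * (B * (α - γ + J)) * (γ + 2*(K+1) - (K+1+J+1)) / ((P * (γ + (K+1))) * (Q * (1 - γ + J)))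
      - c1 * A * B * (γ + 2*(K+1) - (K+1+J)) / ((P * (γ + (K+1))) * Q)
    = -c1 * (A * (α + (K+1))) * B / ((P * (γ + (K+1))) * Q)
      - (-c0 * A * (B * (α - γ + J)) / (P * (Q * (1 - γ + J)))) := by
  have hD : (P * (γ + (K+1))) * (Q * (1 - γ + J)) ≠ 0 :=
    mul_ne_zero (mul_ne_zero hP hA) (mul_ne_zero hQ hB)
  have e2 : c1 * A * B * (γ + 2*(K+1) - (K+1+J)) / ((P * (γ + (K+1))) * Q)
      = c1 * A * B * (γ + K + 1 - J) * (1 - γ + J) / ((P * (γ + (K+1))) * (Q * (1 - γ + J))) := by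
    rw [div_eq_div_iff (mul_ne_zero (mul_ne_zero hP hA) hQ) hD]; ring
  have e3 : -c1 * (A * (α + (K+1))) * B / ((P * (γ + (K+1))) * Q)
      = -c1 * A * (α + K + 1) * B * (1 - γ + J) / ((P * (γ + (K+1))) * (Q * (1 - γ + J))) := by
    rw [div_eq_div_iff (mul_ne_zero (mul_ne_zero hP hA) hQ) hD]; ring
  have e4 : -c0 * A * (B * (α - γ + J)) / (P * (Q * (1 - γ + J)))
      = -c0 * A * B * (α - γ + J) * (γ + (K+1)) / ((P * (γ + (K+1))) * (Q * (1 - γ + J))) := by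
    rw [div_eq_div_iff (mul_ne_zero hP (mul_ne_zero hQ hB)) hD]; ring
  rw [e2, e3, e4, div_sub_div_same, div_sub_div_same]
  congr 1
  linear_combination (A*B*(α-γ+J)) * hrel

section core
variable {γ : ℂ} (hγ : ∀ n : ℤ, γ ≠ (n : ℂ))
include hγ

lemma hP : ∀ j : ℕ, γ + (j:ℂ) ≠ 0 := by
  intro j h; exact hγ (-j) (by push_cast; linear_combination h)

lemma hQ : ∀ j : ℕ, (1-γ) + (j:ℂ) ≠ 0 := by
  intro j h; exact hγ (j+1) (by push_cast; linear_combination -h)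

lemma step (α : ℂ) (n k : ℕ) (hk : k ≤ n + 1) :
    Tc α γ (n+1) k - Tc α γ n k = Gc α γ n (k+1) - Gc α γ n k := by
  have hPne := fun m => poch_ne_zero (hP hγ) m
  have hQne := fun m => poch_ne_zero (hQ hγ) m
  match k with
  | 0 =>
    simp only [Tc, Gc, Nat.choose_zero_right, Nat.cast_one, Nat.sub_zero, poch_zero]
    rw [poch_succ (α - γ) n, poch_succ (1 - γ) n, poch_one, poch_one]
    have h1 : γ ≠ 0 := by have := hP hγ 0; simpa using this
    have h2 : (1:ℂ) - γ + (n:ℂ) ≠ 0 := by have := hQ hγ n; simpa using this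
    have h3 := hQne n
    push_cast
    field_simp
    ring
  | (k'+1) =>
    rcases Nat.lt_or_ge k' n with hlt | hge
    · -- k'+1 ≤ n
      obtain ⟨j, hj⟩ := Nat.le.dest hlt  -- k' + 1 + j = n
      subst hj
      have e1 : k' + 1 + j + 1 - (k' + 1) = j + 1 := by omega
      have e2 : k' + 1 + j - (k' + 1) = j := by omega
      have e3 : k' + 1 + j - k' = j + 1 := by omega
      simp only [Tc, Gc, e1, e2, e3]
      have hpascal : ((k' + 1 + j + 1).choose (k'+1) : ℂ) =
          ((k'+1+j).choose k' : ℂ) + ((k'+1+j).choose (k'+1) : ℂ) := by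
        rw [show k' + 1 + j + 1 = (k'+j+1) + 1 by ring, Nat.choose_succ_succ]
        push_cast
        rw [show k' + j + 1 = k' + 1 + j by ring]
      have hrel : ((k'+1+j).choose (k'+1) : ℂ) * (k'+1) =
          ((k'+1+j).choose k' : ℂ) * (j+1) := by
        have := Nat.choose_succ_right_eq (k'+1+j) k'
        rw [e3] at this
        exact_mod_cast congrArg (Nat.cast (R := ℂ)) this
      rw [poch_succ (α-γ) j, poch_succ (1-γ) j, poch_succ γ (k'+1), poch_succ α (k'+1)]
      push_cast
      simp only [Nat.succ_eq_add_one]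
      rw [hpascal]
      have hAne : γ + ((k':ℂ)+1) ≠ 0 := by
        have := hP hγ (k'+1); push_cast at this; exact this
      have hBne : (1:ℂ) - γ + (j:ℂ) ≠ 0 := by
        have := hQ hγ j; simpa using this
      exact tele_key α γ _ _ _ _ _ _ _ _ hAne hBne (hPne _) (hQne _) hrel
    · -- k = n + 1
      have hkn : k' = n := by omega
      subst hkn
      have hz1 : (k'.choose (k'+1) : ℂ) = 0 := by
        simp [Nat.choose_eq_zero_of_lt]
      simp only [Tc, Gc, hz1, Nat.sub_self, poch_zero,
        show k' + 1 - (k'+1) = 0 by omega, show k' - k' = 0 by omega,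
        show k' + 1 - k' = 1 by omega]
      rw [poch_succ γ (k'+1)]
      have h1 : γ + ((k':ℂ)+1) ≠ 0 := by
        have := hP hγ (k'+1); push_cast at this; exact this
      have hP1 : poch γ (k'+1) ≠ 0 := hPne _
      push_cast
      field_simp
      simp only [Nat.choose_self, Nat.cast_one]
      ring

lemma sum_T (α : ℂ) (n : ℕ) : ∑ k ∈ Finset.range (n+1), Tc α γ n k = 1 := by
  induction n with
  | zero =>
    simp [Tc, poch_zero, poch_one]
    have h1 : γ ≠ 0 := by have := hP hγ 0; simpa using this
    exact h1
  | succ n ih =>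
    have hsum : ∑ k ∈ Finset.range (n+2), Tc α γ (n+1) k
        = ∑ k ∈ Finset.range (n+2), (Tc α γ n k + (Gc α γ n (k+1) - Gc α γ n k)) := by
      apply Finset.sum_congr rfl
      intro k hk
      have hk' : k ≤ n + 1 := by
        have := Finset.mem_range.1 hk; omega
      linear_combination step hγ α n k hk'
    rw [hsum, Finset.sum_add_distrib, Finset.sum_range_sub (f := Gc α γ n)]
    have hG0 : Gc α γ n 0 = 0 := rfl
    have hGtop : Gc α γ n (n+2) = 0 := by
      show -(n.choose (n+1) : ℂ) * _ * _ / _ = 0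
      simp [Nat.choose_eq_zero_of_lt]
    have hTtop : Tc α γ n (n+1) = 0 := by
      simp [Tc, Nat.choose_eq_zero_of_lt]
    rw [hG0, hGtop, Finset.sum_range_succ, hTtop, ih]
    ring


-- pointwise: cγ * s2-term = w-term
lemma pt2 (α : ℂ) (k j : ℕ) :
    (γ-α)/(γ*(γ-1)) * (poch α k * poch (α-γ+1) j /
        (poch (γ+1) k * poch (2-γ) j * (Nat.factorial k : ℂ) * (Nat.factorial j : ℂ)))
    = poch α k * poch (α-γ) (j+1) * ((j:ℂ)+1) /
        (poch γ (k+1) * poch (1-γ) (j+1) * (Nat.factorial k : ℂ) * (Nat.factorial (j+1) : ℂ)) := by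
  have h0 : γ ≠ 0 := by have := hP hγ 0; simpa using this
  have h1 : γ - 1 ≠ 0 := by
    intro h; exact hγ 1 (by push_cast; linear_combination h)
  have h1' : (1:ℂ) - γ ≠ 0 := by intro h; apply h1; linear_combination -h
  have hRne : poch (γ+1) k ≠ 0 := by
    refine poch_ne_zero (fun m h => ?_) k
    exact hP hγ (m+1) (by push_cast; linear_combination h)
  have hSne : poch (2-γ) j ≠ 0 := by
    refine poch_ne_zero (fun m h => ?_) j
    exact hQ hγ (m+1) (by push_cast; linear_combination h)
  have hkf : (Nat.factorial k : ℂ) ≠ 0 := Nat.cast_ne_zero.2 (Nat.factorial_ne_zero k)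
  have hjf : (Nat.factorial j : ℂ) ≠ 0 := Nat.cast_ne_zero.2 (Nat.factorial_ne_zero j)
  have hjne : ((j:ℂ)+1) ≠ 0 := by
    have : ((j+1:ℕ):ℂ) ≠ 0 := Nat.cast_ne_zero.2 (Nat.succ_ne_zero j)
    push_cast at this; exact this
  have e1 : poch γ (k+1) = γ * poch (γ+1) k := poch_succ' _ _
  have e2 : poch (α-γ) (j+1) = (α-γ) * poch (α-γ+1) j := poch_succ' _ _
  have e3 : poch (1-γ) (j+1) = (1-γ) * poch (2-γ) j := by
    rw [poch_succ' (1-γ) j, show (1:ℂ)-γ+1 = 2-γ by ring]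
  have e4 : (Nat.factorial (j+1) : ℂ) = ((j:ℂ)+1) * (Nat.factorial j : ℂ) := by
    rw [Nat.factorial_succ]; push_cast; ring
  rw [e1, e2, e3, e4, div_mul_div_comm, div_eq_div_iff
    (by apply_rules [mul_ne_zero]) (by apply_rules [mul_ne_zero])]
  ring


end core


lemma pt3_key (γ A B P Q kf jf nf ch K J : ℂ) (hPk : P ≠ 0) (hQj : Q ≠ 0)
    (hgk : γ + K ≠ 0) (hkf : kf ≠ 0) (hjf : jf ≠ 0) (hnf : nf ≠ 0)
    (hch : ch * kf * jf = nf) :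
    A * B / (P * Q * kf * jf) - A * B * J / (P * (γ + K) * Q * kf * jf)
      = ch * A * B * (γ + 2*K - (K + J)) / (P * (γ + K) * Q) / nf := by
  have hD1 : P * Q * kf * jf ≠ 0 := by apply_rules [mul_ne_zero]
  have hD2 : P * (γ + K) * Q * kf * jf ≠ 0 := by apply_rules [mul_ne_zero]
  have hD3 : P * (γ + K) * Q * nf ≠ 0 := by apply_rules [mul_ne_zero]
  rw [div_sub_div _ _ hD1 hD2, div_div, div_eq_div_iff (mul_ne_zero hD1 hD2) hD3]
  linear_combination (-(A*B*P^2*Q^2*kf*jf*(γ + K - J)*(γ + K))) * hch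

lemma pt3 {γ : ℂ} (hγ : ∀ n : ℤ, γ ≠ (n : ℂ)) (α : ℂ) (k j : ℕ) :
    poch α k * poch (α-γ) j / (poch γ k * poch (1-γ) j * (Nat.factorial k : ℂ) * (Nat.factorial j : ℂ))
      - poch α k * poch (α-γ) j * (j:ℂ) / (poch γ (k+1) * poch (1-γ) j * (Nat.factorial k : ℂ) * (Nat.factorial j : ℂ))
    = Tc α γ (k+j) k / (Nat.factorial (k+j) : ℂ) := by
  have hPk : poch γ k ≠ 0 := poch_ne_zero (hP hγ) k
  have hQj : poch (1-γ) j ≠ 0 := poch_ne_zero (hQ hγ) j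
  have hgk : γ + (k:ℂ) ≠ 0 := hP hγ k
  have hkf : (Nat.factorial k : ℂ) ≠ 0 := Nat.cast_ne_zero.2 (Nat.factorial_ne_zero k)
  have hjf : (Nat.factorial j : ℂ) ≠ 0 := Nat.cast_ne_zero.2 (Nat.factorial_ne_zero j)
  have hnf : (Nat.factorial (k+j) : ℂ) ≠ 0 := Nat.cast_ne_zero.2 (Nat.factorial_ne_zero _)
  have hch' : ((k+j).choose k : ℂ) * (Nat.factorial k : ℂ) * (Nat.factorial j : ℂ)
      = (Nat.factorial (k+j) : ℂ) := by
    have := Nat.choose_mul_factorial_mul_factorial (Nat.le_add_right k j)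
    rw [show k + j - k = j by omega] at this
    exact_mod_cast congrArg (Nat.cast (R := ℂ)) this
  simp only [Tc, show k + j - k = j by omega]
  rw [poch_succ γ k]
  push_cast
  exact pt3_key γ _ _ _ _ _ _ _ _ _ _ hPk hQj hgk hkf hjf hnf hch'

lemma master {γ : ℂ} (hγ : ∀ n : ℤ, γ ≠ (n : ℂ)) (α : ℂ) (n : ℕ)
    (hsumT : ∑ k ∈ Finset.range (n+1), Tc α γ n k = 1) :
    (∑ k ∈ Finset.range (n+1), poch α k * poch (α-γ) (n-k) /
        (poch γ k * poch (1-γ) (n-k) * (Nat.factorial k : ℂ) * (Nat.factorial (n-k) : ℂ)))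
      - (γ-α)/(γ*(γ-1)) * (∑ k ∈ Finset.range n, poch α k * poch (α-γ+1) (n-1-k) /
        (poch (γ+1) k * poch (2-γ) (n-1-k) * (Nat.factorial k : ℂ) * (Nat.factorial (n-1-k) : ℂ)))
    = 1 / (Nat.factorial n : ℂ) := by
  have hw : (γ-α)/(γ*(γ-1)) * (∑ k ∈ Finset.range n, poch α k * poch (α-γ+1) (n-1-k) /
        (poch (γ+1) k * poch (2-γ) (n-1-k) * (Nat.factorial k : ℂ) * (Nat.factorial (n-1-k) : ℂ)))
      = ∑ k ∈ Finset.range n, poch α k * poch (α-γ) (n-k) * ((n-k : ℕ) : ℂ) /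
        (poch γ (k+1) * poch (1-γ) (n-k) * (Nat.factorial k : ℂ) * (Nat.factorial (n-k) : ℂ)) := by
    rw [Finset.mul_sum]
    apply Finset.sum_congr rfl
    intro k hk
    have hkn : k < n := Finset.mem_range.1 hk
    have hj : n - k = (n - 1 - k) + 1 := by omega
    rw [hj]
    push_cast
    exact pt2 hγ α k (n-1-k)
  rw [hw]
  have hext : ∑ k ∈ Finset.range n, poch α k * poch (α-γ) (n-k) * ((n-k : ℕ) : ℂ) /
        (poch γ (k+1) * poch (1-γ) (n-k) * (Nat.factorial k : ℂ) * (Nat.factorial (n-k) : ℂ))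
      = ∑ k ∈ Finset.range (n+1), poch α k * poch (α-γ) (n-k) * ((n-k : ℕ) : ℂ) /
        (poch γ (k+1) * poch (1-γ) (n-k) * (Nat.factorial k : ℂ) * (Nat.factorial (n-k) : ℂ)) := by
    rw [Finset.sum_range_succ]
    simp
  rw [hext, ← Finset.sum_sub_distrib]
  have hcong : ∀ k ∈ Finset.range (n+1),
      poch α k * poch (α-γ) (n-k) /
        (poch γ k * poch (1-γ) (n-k) * (Nat.factorial k : ℂ) * (Nat.factorial (n-k) : ℂ))
      - poch α k * poch (α-γ) (n-k) * ((n-k : ℕ) : ℂ) /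
        (poch γ (k+1) * poch (1-γ) (n-k) * (Nat.factorial k : ℂ) * (Nat.factorial (n-k) : ℂ))
      = Tc α γ n k / (Nat.factorial n : ℂ) := by
    intro k hk
    have hkn : k ≤ n := by have := Finset.mem_range.1 hk; omega
    have := pt3 hγ α k (n-k)
    rw [show k + (n-k) = n by omega] at this
    exact this
  rw [Finset.sum_congr rfl hcong, ← Finset.sum_div, hsumT]



theorem oneF1_wronskian (α γ x : ℂ) (hγ : ∀ n : ℤ, γ ≠ (n : ℂ)) :
    oneF1 α γ x * oneF1 (α - γ) (1 - γ) x -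
        (γ - α) * x / (γ * (γ - 1)) * oneF1 α (γ + 1) x * oneF1 (α - γ + 1) (2 - γ) x =
      Complex.exp x := by
  have hPg : ∀ j : ℕ, γ + (j:ℂ) ≠ 0 := hP hγ
  have hQg : ∀ j : ℕ, (1-γ) + (j:ℂ) ≠ 0 := hQ hγ
  have hP1 : ∀ j : ℕ, (γ+1) + (j:ℂ) ≠ 0 := by
    intro j h; exact hPg (j+1) (by push_cast; linear_combination h)
  have hQ1 : ∀ j : ℕ, (2-γ) + (j:ℂ) ≠ 0 := by
    intro j h; exact hQg (j+1) (by push_cast; linear_combination h)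
  set f1 : ℕ → ℂ := fun k => poch α k / poch γ k * x ^ k / (Nat.factorial k : ℂ) with hf1
  set f2 : ℕ → ℂ := fun k => poch (α-γ) k / poch (1-γ) k * x ^ k / (Nat.factorial k : ℂ) with hf2
  set g1 : ℕ → ℂ := fun k => poch α k / poch (γ+1) k * x ^ k / (Nat.factorial k : ℂ) with hg1
  set g2 : ℕ → ℂ := fun k => poch (α-γ+1) k / poch (2-γ) k * x ^ k / (Nat.factorial k : ℂ) with hg2
  have S1 := summable_norm_oneF1 α γ x hPg
  have S2 := summable_norm_oneF1 (α-γ) (1-γ) x hQg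
  have S3 := summable_norm_oneF1 α (γ+1) x hP1
  have S4 := summable_norm_oneF1 (α-γ+1) (2-γ) x hQ1
  have h1 : oneF1 α γ x * oneF1 (α - γ) (1 - γ) x
      = ∑' n : ℕ, ∑ kl ∈ Finset.HasAntidiagonal.antidiagonal n, f1 kl.1 * f2 kl.2 :=
    tsum_mul_tsum_eq_tsum_sum_antidiagonal_of_summable_norm S1 S2
  have h2 : oneF1 α (γ+1) x * oneF1 (α - γ + 1) (2 - γ) x
      = ∑' n : ℕ, ∑ kl ∈ Finset.HasAntidiagonal.antidiagonal n, g1 kl.1 * g2 kl.2 :=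
    tsum_mul_tsum_eq_tsum_sum_antidiagonal_of_summable_norm S3 S4
  set Cn : ℕ → ℂ := fun n => ∑ kl ∈ Finset.HasAntidiagonal.antidiagonal n, f1 kl.1 * f2 kl.2 with hCn
  set Dn : ℕ → ℂ := fun n => ∑ kl ∈ Finset.HasAntidiagonal.antidiagonal n, g1 kl.1 * g2 kl.2 with hDn
  have hSC : Summable Cn := (summable_norm_sum_mul_antidiagonal_of_summable_norm S1 S2).of_norm
  have hSD : Summable Dn := (summable_norm_sum_mul_antidiagonal_of_summable_norm S3 S4).of_norm
  set c : ℂ := (γ - α) * x / (γ * (γ - 1)) with hc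
  set E : ℕ → ℂ := fun n => Nat.casesOn n 0 (fun m => c * Dn m) with hE
  have hSE : Summable E := by
    rw [← summable_nat_add_iff 1]
    exact (hSD.mul_left c)
  have hEsum : c * (∑' n, Dn n) = ∑' n, E n := by
    rw [← tsum_mul_left, Summable.tsum_eq_zero_add hSE]
    exact (zero_add _).symm
  have hpow : Summable (fun n : ℕ => x ^ n / (Nat.factorial n : ℂ)) :=
    NormedSpace.expSeries_div_summable x
  -- key coefficient identity
  have key : ∀ n : ℕ, Cn n = E n + x ^ n / (Nat.factorial n : ℂ) := by
    intro n
    have hmaster := master hγ α n (sum_T hγ α n)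
    have hCval : Cn n = x ^ n * ∑ k ∈ Finset.range (n+1), poch α k * poch (α-γ) (n-k) /
        (poch γ k * poch (1-γ) (n-k) * (Nat.factorial k : ℂ) * (Nat.factorial (n-k) : ℂ)) := by
      rw [hCn]
      simp only
      rw [Finset.Nat.sum_antidiagonal_eq_sum_range_succ_mk, Finset.mul_sum]
      apply Finset.sum_congr rfl
      intro k hk
      have hkn : k ≤ n := by have := Finset.mem_range.1 hk; omega
      simp only [hf1, hf2]
      rw [show x ^ n = x ^ k * x ^ (n-k) by rw [← pow_add]; congr 1; omega]
      ring
    have hEval : E n = x ^ n * ((γ-α)/(γ*(γ-1)) * ∑ k ∈ Finset.range n,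
        poch α k * poch (α-γ+1) (n-1-k) /
        (poch (γ+1) k * poch (2-γ) (n-1-k) * (Nat.factorial k : ℂ) * (Nat.factorial (n-1-k) : ℂ))) := by
      match n with
      | 0 => simp [hE]
      | (m+1) =>
        show c * Dn m = _
        rw [hDn]
        simp only
        rw [Finset.Nat.sum_antidiagonal_eq_sum_range_succ_mk]
        rw [hc, Finset.mul_sum, Finset.mul_sum, Finset.mul_sum]
        apply Finset.sum_congr rfl
        intro k hk
        have hkn : k ≤ m := by have := Finset.mem_range.1 hk; omega
        simp only [hg1, hg2, show m + 1 - 1 - k = m - k from by omega]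
        rw [show x ^ (m+1) = x * (x ^ k * x ^ (m-k)) by rw [← pow_add]; rw [← pow_succ']; congr 1; omega]
        ring
    rw [hCval, hEval]
    linear_combination (x ^ n) * hmaster
  rw [h1, mul_assoc, h2, hEsum]
  have : ∑' n, Cn n = (∑' n, E n) + ∑' n, x ^ n / (Nat.factorial n : ℂ) := by
    rw [← Summable.tsum_add hSE hpow]
    exact tsum_congr key
  rw [this]
  have hexp : Complex.exp x = ∑' n : ℕ, x ^ n / (Nat.factorial n : ℂ) := by
    rw [Complex.exp_eq_exp_ℂ, NormedSpace.exp_eq_tsum_div]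
  rw [hexp]
  ring
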